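/- Let U ⊆ ℂ² ⊗ ℂ³ be a 2-dimensional complex linear subspace with exactly one decomposable direction, and let V₀ ⊆ ℂ³ be the smallest linear subspace with U ⊆ ℂ² ⊗ V₀. Then dim V₀ ∈ {2, 3}; moreover, dim V₀ = 2 if and only if U admits a presentation U = span{h₁ ⊗ x + h₂ ⊗ z, h₂ ⊗ x} with (h₁, h₂) a basis of ℂ² and (x, z) linearly independent in ℂ³, and dim V₀ = 3 if and only if U admits a presentation U = span{h₁ ⊗ x + h₂ ⊗ z, h₂ ⊗ x′} with (h₁, h₂) a basis of ℂ² and (x, x′, z) a basis of ℂ³. In particular the two normal forms are mutually exclusive. -/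

import Mathlib

open Matrix

/-- A nonzero element of `ℂ² ⊗ ℂ³`, viewed as a 2×3 complex matrix, is decomposable if it
is an outer product `h ⊗ x` with `h ≠ 0` and `x ≠ 0` (equivalently, it has rank 1). -/
def Decomposable (A : Matrix (Fin 2) (Fin 3) ℂ) : Prop :=
  ∃ (h : Fin 2 → ℂ) (x : Fin 3 → ℂ), h ≠ 0 ∧ x ≠ 0 ∧ A = vecMulVec h x

/-- The decomposable directions of a subspace `U ⊆ ℂ² ⊗ ℂ³`: the 1-dimensional subspaces
of `U` spanned by decomposable elements. -/
def decDirections (U : Submodule ℂ (Matrix (Fin 2) (Fin 3) ℂ)) :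
    Set (Submodule ℂ (Matrix (Fin 2) (Fin 3) ℂ)) :=
  {D | ∃ A : Matrix (Fin 2) (Fin 3) ℂ,
    A ∈ U ∧ A ≠ 0 ∧ Decomposable A ∧ D = Submodule.span ℂ {A}}

section Aux
open Submodule

namespace Stmt9Aux

lemma range2 {α : Type*} (a b : α) : Set.range ![a, b] = {a, b} := by
  ext w
  constructor
  · rintro ⟨i, rfl⟩; fin_cases i <;> simp
  · rintro (rfl | rfl); exacts [⟨0, rfl⟩, ⟨1, rfl⟩]

lemma range3 {α : Type*} (a b c : α) : Set.range ![a, b, c] = {a, b, c} := by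
  ext w
  constructor
  · rintro ⟨i, rfl⟩; fin_cases i <;> simp
  · rintro (rfl | rfl | rfl); exacts [⟨0, rfl⟩, ⟨1, rfl⟩, ⟨2, rfl⟩]

lemma ne_zero_iff {n : ℕ} {f : Fin n → ℂ} : f ≠ 0 ↔ ∃ i, f i ≠ 0 := by
  simp [Function.ne_iff]

lemma vecMulVec_row (h : Fin 2 → ℂ) (x : Fin 3 → ℂ) (i : Fin 2) :
    vecMulVec h x i = h i • x := by
  funext j; simp [Matrix.vecMulVec_apply]

lemma indep2_det {f g : Fin 2 → ℂ} (h : LinearIndependent ℂ ![f, g]) :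
    f 0 * g 1 - f 1 * g 0 ≠ 0 := by
  rw [linearIndependent_fin2] at h
  obtain ⟨hg, hfg⟩ := h
  simp only [Matrix.cons_val_one, Matrix.head_cons, Matrix.cons_val_zero] at hg hfg
  intro hd
  have hg' : g 0 ≠ 0 ∨ g 1 ≠ 0 := by
    by_contra hc
    push_neg at hc
    exact hg (funext fun j => by fin_cases j <;> simp [hc.1, hc.2])
  rcases hg' with hk | hk
  · apply hfg (f 0 / g 0)
    funext j
    simp only [Pi.smul_apply, smul_eq_mul]
    fin_cases j <;> simp only [Fin.zero_eta, Fin.mk_one]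
    · field_simp
    · field_simp
      linear_combination hd
  · apply hfg (f 1 / g 1)
    funext j
    simp only [Pi.smul_apply, smul_eq_mul]
    fin_cases j <;> simp only [Fin.zero_eta, Fin.mk_one]
    · field_simp
      linear_combination -hd
    · field_simp

lemma indep2_of {u v : Fin 3 → ℂ} (hu : u ≠ 0) (hv : v ∉ span ℂ ({u} : Set (Fin 3 → ℂ))) :
    LinearIndependent ℂ ![u, v] := by
  rw [linearIndependent_fin2]
  refine ⟨?_, ?_⟩
  · simp only [Matrix.cons_val_one, Matrix.head_cons]
    intro h
    simp only [Matrix.cons_val_fin_one] at h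
    exact hv (h ▸ zero_mem _)
  · intro a ha
    simp only [Matrix.cons_val_one, Matrix.head_cons, Matrix.cons_val_zero] at ha
    rcases eq_or_ne a 0 with rfl | ha0
    · rw [zero_smul] at ha; exact hu ha.symm
    · exact hv (mem_span_singleton.2 ⟨a⁻¹, by rw [← ha, smul_smul, inv_mul_cancel₀ ha0, one_smul]⟩)

lemma decompose {h₁ h₂ : Fin 2 → ℂ} (hd : h₁ 0 * h₂ 1 - h₁ 1 * h₂ 0 ≠ 0)
    (A : Matrix (Fin 2) (Fin 3) ℂ) :
    ∃ u v : Fin 3 → ℂ, A = vecMulVec h₁ u + vecMulVec h₂ v ∧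
      u ∈ span ℂ ({A 0, A 1} : Set (Fin 3 → ℂ)) ∧
      v ∈ span ℂ ({A 0, A 1} : Set (Fin 3 → ℂ)) := by
  set d := h₁ 0 * h₂ 1 - h₁ 1 * h₂ 0 with hdef
  refine ⟨d⁻¹ • (h₂ 1 • A 0 - h₂ 0 • A 1), d⁻¹ • (h₁ 0 • A 1 - h₁ 1 • A 0), ?_, ?_, ?_⟩
  · ext i j
    fin_cases i <;> simp only [Fin.zero_eta, Fin.mk_one] <;>
      · simp only [Matrix.add_apply, Matrix.vecMulVec_apply, Pi.smul_apply, Pi.sub_apply,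
          smul_eq_mul]
        field_simp
        ring
  · exact mem_span_pair.2 ⟨d⁻¹ * h₂ 1, -(d⁻¹ * h₂ 0), by
      funext j; simp only [Pi.add_apply, Pi.smul_apply, Pi.sub_apply, smul_eq_mul]; ring⟩
  · exact mem_span_pair.2 ⟨-(d⁻¹ * h₁ 1), d⁻¹ * h₁ 0, by
      funext j; simp only [Pi.add_apply, Pi.smul_apply, Pi.sub_apply, smul_eq_mul]; ring⟩

end Stmt9Aux
end Aux

open Stmt9Aux Submodule

/-- Let `U ⊆ ℂ² ⊗ ℂ³` be 2-dimensional with exactly one decomposable direction, and let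
`V₀ ⊆ ℂ³` be the smallest subspace with `U ⊆ ℂ² ⊗ V₀` (i.e. all rows of all elements of `U`
lie in `V₀`, and `V₀` is minimal with this property). Then `dim V₀ ∈ {2, 3}`; moreover
`dim V₀ = 2` iff `U = span {h₁ ⊗ x + h₂ ⊗ z, h₂ ⊗ x}` with `(h₁, h₂)` a basis of `ℂ²` and
`(x, z)` linearly independent, and `dim V₀ = 3` iff
`U = span {h₁ ⊗ x + h₂ ⊗ z, h₂ ⊗ x'}` with `(h₁, h₂)` a basis of `ℂ²` and `(x, x', z)` a
basis of `ℂ³`. In particular the two normal forms are mutually exclusive. -/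
theorem stmt_9 (U : Submodule ℂ (Matrix (Fin 2) (Fin 3) ℂ))
    (hU : Module.finrank ℂ U = 2)
    (hone : ∃ D : Submodule ℂ (Matrix (Fin 2) (Fin 3) ℂ), decDirections U = {D})
    (V₀ : Submodule ℂ (Fin 3 → ℂ))
    (hV₀ : ∀ A ∈ U, ∀ i : Fin 2, A i ∈ V₀)
    (hmin : ∀ W : Submodule ℂ (Fin 3 → ℂ), (∀ A ∈ U, ∀ i : Fin 2, A i ∈ W) → V₀ ≤ W) :
    (Module.finrank ℂ V₀ = 2 ∨ Module.finrank ℂ V₀ = 3) ∧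
    (Module.finrank ℂ V₀ = 2 ↔
      ∃ (h₁ h₂ : Fin 2 → ℂ) (x z : Fin 3 → ℂ),
        LinearIndependent ℂ ![h₁, h₂] ∧ LinearIndependent ℂ ![x, z] ∧
        U = Submodule.span ℂ {vecMulVec h₁ x + vecMulVec h₂ z, vecMulVec h₂ x}) ∧
    (Module.finrank ℂ V₀ = 3 ↔
      ∃ (h₁ h₂ : Fin 2 → ℂ) (x x' z : Fin 3 → ℂ),
        LinearIndependent ℂ ![h₁, h₂] ∧ LinearIndependent ℂ ![x, x', z] ∧
        U = Submodule.span ℂ {vecMulVec h₁ x + vecMulVec h₂ z, vecMulVec h₂ x'}) := by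
  classical
  -- V₀ is the row span of U
  set S : Set (Fin 3 → ℂ) := {w | ∃ C ∈ U, ∃ i : Fin 2, C i = w} with hSdef
  have hVS : V₀ = span ℂ S := by
    refine le_antisymm (hmin _ fun C hC i => subset_span ⟨C, hC, i, rfl⟩) ?_
    rw [span_le]
    rintro w ⟨C, hC, i, rfl⟩
    exact hV₀ C hC i
  have hrowsS : ∀ C ∈ U, ∀ i : Fin 2, C i ∈ span ℂ S := fun C hC i => subset_span ⟨C, hC, i, rfl⟩
  -- the unique decomposable direction
  obtain ⟨D, hD⟩ := hone
  have hDmem : D ∈ decDirections U := by rw [hD]; rfl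
  obtain ⟨B, hBU, hB0, hBdec, hDB⟩ := hDmem
  have huniq : ∀ C, C ∈ U → C ≠ 0 → Decomposable C →
      C ∈ span ℂ ({B} : Set (Matrix (Fin 2) (Fin 3) ℂ)) := by
    intro C hCU hC0 hCdec
    have hmem : Submodule.span ℂ {C} ∈ decDirections U := ⟨C, hCU, hC0, hCdec, rfl⟩
    rw [hD, Set.mem_singleton_iff] at hmem
    have hCB : Submodule.span ℂ {C} = span ℂ ({B} : Set (Matrix (Fin 2) (Fin 3) ℂ)) := by
      rw [hmem, hDB]
    exact hCB ▸ mem_span_singleton_self C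
  -- a complement A of B inside U
  have hBle : span ℂ ({B} : Set (Matrix (Fin 2) (Fin 3) ℂ)) ≤ U := by
    rw [span_le]; simpa using hBU
  have hBneU : span ℂ ({B} : Set (Matrix (Fin 2) (Fin 3) ℂ)) ≠ U := by
    intro h
    have h1 : Module.finrank ℂ (span ℂ ({B} : Set (Matrix (Fin 2) (Fin 3) ℂ))) = 1 :=
      finrank_span_singleton hB0
    rw [h, hU] at h1
    exact absurd h1 (by norm_num)
  obtain ⟨A, hAU, hAns⟩ := SetLike.exists_of_lt (lt_of_le_of_ne hBle hBneU)
  have hA0 : A ≠ 0 := fun h => hAns (h ▸ zero_mem _)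
  have hiAB : LinearIndependent ℂ ![A, B] := by
    rw [linearIndependent_fin2]
    constructor
    · simpa using hB0
    · intro a ha
      simp only [Matrix.cons_val_one, Matrix.head_cons, Matrix.cons_val_zero] at ha
      exact hAns (mem_span_singleton.2 ⟨a, ha⟩)
  have hUAB : U = span ℂ ({A, B} : Set (Matrix (Fin 2) (Fin 3) ℂ)) := by
    refine (Submodule.eq_of_le_of_finrank_eq ?_ ?_).symm
    · rw [span_le]
      exact Set.insert_subset_iff.2 ⟨hAU, by simpa using hBU⟩
    · rw [hU, ← range2 A B, finrank_span_eq_card hiAB, Fintype.card_fin]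
  obtain ⟨h₂, x', hh₂, hx', hBeq⟩ := hBdec
  obtain ⟨k, hk⟩ := ne_zero_iff.1 hh₂
  -- a vector h₁ completing h₂ to a basis
  set h₁ : Fin 2 → ℂ := fun i => if i = k then 0 else 1 with hh₁def
  have hh₁0 : h₁ ≠ 0 := by
    intro h
    have h01 : h₁ 0 = 0 ∧ h₁ 1 = 0 := by rw [h]; simp
    fin_cases k <;> simp [hh₁def] at h01
  have hih : LinearIndependent ℂ ![h₁, h₂] := by
    rw [linearIndependent_fin2]
    constructor
    · simpa using hh₂
    · intro a ha
      simp only [Matrix.cons_val_one, Matrix.head_cons, Matrix.cons_val_zero] at ha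
      have := congrFun ha k
      simp only [Pi.smul_apply, smul_eq_mul, hh₁def, if_pos rfl] at this
      rcases mul_eq_zero.1 this with rfl | h
      · rw [zero_smul] at ha
        exact hh₁0 ha.symm
      · exact hk h
  have hd : h₁ 0 * h₂ 1 - h₁ 1 * h₂ 0 ≠ 0 := indep2_det hih
  obtain ⟨u, v, hAeq, huS, hvS⟩ := decompose hd A
  -- u ≠ 0, else A itself would be decomposable off the line of B
  have hu0 : u ≠ 0 := by
    intro h
    have hAv : A = vecMulVec h₂ v := by
      rw [hAeq, h]
      ext i j
      simp [Matrix.vecMulVec_apply]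
    have hv0 : v ≠ 0 := by
      intro hv0
      apply hA0
      rw [hAv, hv0]
      ext i j
      simp [Matrix.vecMulVec_apply]
    exact hAns (huniq A hAU hA0 ⟨h₂, v, hh₂, hv0, hAv⟩)
  -- v is not in span {u, x'}, else there is a second decomposable direction
  have hvnotin : v ∉ span ℂ ({u, x'} : Set (Fin 3 → ℂ)) := by
    intro hv
    obtain ⟨a, b, hab⟩ := mem_span_pair.1 hv
    set A'' := A - b • B with hA''def
    have hA''U : A'' ∈ U := sub_mem hAU (smul_mem _ _ hBU)
    have hA''ns : A'' ∉ span ℂ ({B} : Set (Matrix (Fin 2) (Fin 3) ℂ)) := by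
      intro h
      apply hAns
      have hAdecomp : A = A'' + b • B := by rw [hA''def]; abel
      rw [hAdecomp]
      exact add_mem h (smul_mem _ _ (mem_span_singleton_self B))
    have hA''0 : A'' ≠ 0 := fun h => hA''ns (h ▸ zero_mem _)
    have hne : h₁ + a • h₂ ≠ 0 := by
      intro h
      have hk0 : a * h₂ k = 0 := by
        have h' := congrFun h k
        simpa [hh₁def] using h'
      rcases mul_eq_zero.1 hk0 with rfl | h'
      · rw [zero_smul, add_zero] at h
        exact hh₁0 h
      · exact hk h'
    have hdecA'' : Decomposable A'' := by
      refine ⟨h₁ + a • h₂, u, hne, hu0, ?_⟩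
      ext i j
      have hvj : a * u j + b * x' j = v j := by
        have := congrFun hab j
        simpa using this
      simp only [hA''def, hAeq, hBeq, Matrix.sub_apply, Matrix.smul_apply, Matrix.add_apply,
        Matrix.vecMulVec_apply, Pi.add_apply, Pi.smul_apply, smul_eq_mul]
      linear_combination -(h₂ i) * hvj
    exact hA''ns (huniq A'' hA''U hA''0 hdecA'')
  have hv0 : v ≠ 0 := fun h => hvnotin (h ▸ zero_mem _)
  have hiuv : LinearIndependent ℂ ![u, v] :=
    indep2_of hu0 fun h => hvnotin (span_mono (Set.singleton_subset_iff.2 (by simp)) h)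
  -- V₀ = span {u, v, x'}
  have hx'memS : x' ∈ span ℂ S := by
    have hBk : B k = h₂ k • x' := by rw [hBeq]; exact vecMulVec_row _ _ k
    have hx'eq : x' = (h₂ k)⁻¹ • B k := by
      rw [hBk, smul_smul, inv_mul_cancel₀ hk, one_smul]
    rw [hx'eq]
    exact smul_mem _ _ (hrowsS B hBU k)
  have hAB_S : span ℂ ({A 0, A 1} : Set (Fin 3 → ℂ)) ≤ span ℂ S := by
    rw [span_le]
    intro w hw
    simp only [Set.mem_insert_iff, Set.mem_singleton_iff] at hw
    rcases hw with rfl | rfl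
    exacts [hrowsS A hAU 0, hrowsS A hAU 1]
  have hV : V₀ = span ℂ ({u, v, x'} : Set (Fin 3 → ℂ)) := by
    rw [hVS]
    refine le_antisymm ?_ ?_
    · rw [span_le]
      rintro w ⟨C, hC, i, rfl⟩
      rw [hUAB] at hC
      obtain ⟨a, b, hab⟩ := mem_span_pair.1 hC
      have hCi : C i = (a * h₁ i) • u + ((a * h₂ i) • v + (b * h₂ i) • x') := by
        rw [← hab]
        funext j
        simp only [hAeq, hBeq, Pi.add_apply, Pi.smul_apply, Matrix.add_apply, Matrix.smul_apply,
          Matrix.vecMulVec_apply, smul_eq_mul]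
        ring
      rw [hCi]
      exact add_mem (smul_mem _ _ (subset_span (by simp)))
        (add_mem (smul_mem _ _ (subset_span (by simp))) (smul_mem _ _ (subset_span (by simp))))
    · rw [span_le]
      intro w hw
      simp only [Set.mem_insert_iff, Set.mem_singleton_iff] at hw
      rcases hw with rfl | rfl | rfl
      exacts [hAB_S huS, hAB_S hvS, hx'memS]
  -- dimension bounds
  have hfr_le3 : Module.finrank ℂ V₀ ≤ 3 := by
    have h := V₀.finrank_le
    rwa [Module.finrank_fin_fun] at h
  have hWuv : span ℂ ({u, v} : Set (Fin 3 → ℂ)) ≤ V₀ := by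
    rw [hV, span_le]
    intro w hw
    simp only [Set.mem_insert_iff, Set.mem_singleton_iff] at hw
    rcases hw with rfl | rfl
    exacts [subset_span (by simp), subset_span (by simp)]
  have hfr_uv : Module.finrank ℂ (span ℂ ({u, v} : Set (Fin 3 → ℂ))) = 2 := by
    rw [← range2 u v, finrank_span_eq_card hiuv, Fintype.card_fin]
  have hge2 : 2 ≤ Module.finrank ℂ V₀ := hfr_uv ▸ Submodule.finrank_mono hWuv
  -- backward direction for the 2-dimensional normal form
  have back2 : ∀ (g₁ g₂ : Fin 2 → ℂ) (x z : Fin 3 → ℂ),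
      LinearIndependent ℂ ![g₁, g₂] → LinearIndependent ℂ ![x, z] →
      U = span ℂ {vecMulVec g₁ x + vecMulVec g₂ z, vecMulVec g₂ x} →
      Module.finrank ℂ V₀ = 2 := by
    intro g₁ g₂ x z hg hxz hU'
    set M₁ := vecMulVec g₁ x + vecMulVec g₂ z with hM₁def
    set M₂ := vecMulVec g₂ x with hM₂def
    have hM₁U : M₁ ∈ U := by rw [hU']; exact subset_span (by simp)
    have hM₂U : M₂ ∈ U := by rw [hU']; exact subset_span (by simp)
    have hdg : g₁ 0 * g₂ 1 - g₁ 1 * g₂ 0 ≠ 0 := indep2_det hg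
    have hg2 : g₂ ≠ 0 := by
      have := (linearIndependent_fin2.1 hg).1
      simpa using this
    obtain ⟨m, hm⟩ := ne_zero_iff.1 hg2
    have hVxz : V₀ = span ℂ ({x, z} : Set (Fin 3 → ℂ)) := by
      rw [hVS]
      refine le_antisymm ?_ ?_
      · rw [span_le]
        rintro w ⟨C, hC, i, rfl⟩
        rw [hU'] at hC
        obtain ⟨a, b, hab⟩ := mem_span_pair.1 hC
        refine mem_span_pair.2 ⟨a * g₁ i + b * g₂ i, a * g₂ i, ?_⟩
        rw [← hab]
        funext j
        simp only [hM₁def, hM₂def, Pi.add_apply, Pi.smul_apply, Matrix.add_apply,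
          Matrix.smul_apply, Matrix.vecMulVec_apply, smul_eq_mul]
        ring
      · rw [span_le]
        intro w hw
        simp only [Set.mem_insert_iff, Set.mem_singleton_iff] at hw
        rcases hw with rfl | rfl
        · have hx : w = (g₂ m)⁻¹ • M₂ m := by
            rw [hM₂def, vecMulVec_row, smul_smul, inv_mul_cancel₀ hm, one_smul]
          rw [hx]
          exact smul_mem _ _ (hrowsS M₂ hM₂U m)
        · have hz : w = ((g₁ 0 * g₂ 1 - g₁ 1 * g₂ 0)⁻¹ * g₁ 0) • M₁ 1 +
              (-((g₁ 0 * g₂ 1 - g₁ 1 * g₂ 0)⁻¹ * g₁ 1)) • M₁ 0 := by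
            funext j
            simp only [hM₁def, Pi.add_apply, Pi.smul_apply, Matrix.add_apply,
              Matrix.vecMulVec_apply, smul_eq_mul]
            field_simp
            ring
          rw [hz]
          exact add_mem (smul_mem _ _ (hrowsS M₁ hM₁U 1)) (smul_mem _ _ (hrowsS M₁ hM₁U 0))
    rw [hVxz, ← range2 x z, finrank_span_eq_card hxz, Fintype.card_fin]
  -- backward direction for the 3-dimensional normal form
  have back3 : ∀ (g₁ g₂ : Fin 2 → ℂ) (x y z : Fin 3 → ℂ),
      LinearIndependent ℂ ![g₁, g₂] → LinearIndependent ℂ ![x, y, z] →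
      U = span ℂ {vecMulVec g₁ x + vecMulVec g₂ z, vecMulVec g₂ y} →
      Module.finrank ℂ V₀ = 3 := by
    intro g₁ g₂ x y z hg hxyz hU'
    set M₁ := vecMulVec g₁ x + vecMulVec g₂ z with hM₁def
    set M₂ := vecMulVec g₂ y with hM₂def
    have hM₁U : M₁ ∈ U := by rw [hU']; exact subset_span (by simp)
    have hM₂U : M₂ ∈ U := by rw [hU']; exact subset_span (by simp)
    have hdg : g₁ 0 * g₂ 1 - g₁ 1 * g₂ 0 ≠ 0 := indep2_det hg
    have hg2 : g₂ ≠ 0 := by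
      have := (linearIndependent_fin2.1 hg).1
      simpa using this
    obtain ⟨m, hm⟩ := ne_zero_iff.1 hg2
    have hVxyz : V₀ = span ℂ ({x, y, z} : Set (Fin 3 → ℂ)) := by
      rw [hVS]
      refine le_antisymm ?_ ?_
      · rw [span_le]
        rintro w ⟨C, hC, i, rfl⟩
        rw [hU'] at hC
        obtain ⟨a, b, hab⟩ := mem_span_pair.1 hC
        have hCi : C i = (a * g₁ i) • x + ((b * g₂ i) • y + (a * g₂ i) • z) := by
          rw [← hab]
          funext j
          simp only [hM₁def, hM₂def, Pi.add_apply, Pi.smul_apply, Matrix.add_apply,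
            Matrix.smul_apply, Matrix.vecMulVec_apply, smul_eq_mul]
          ring
        rw [hCi]
        exact add_mem (smul_mem _ _ (subset_span (by simp)))
          (add_mem (smul_mem _ _ (subset_span (by simp)))
            (smul_mem _ _ (subset_span (by simp))))
      · rw [span_le]
        intro w hw
        simp only [Set.mem_insert_iff, Set.mem_singleton_iff] at hw
        rcases hw with rfl | rfl | rfl
        · have hx : w = ((g₁ 0 * g₂ 1 - g₁ 1 * g₂ 0)⁻¹ * g₂ 1) • M₁ 0 +
              (-((g₁ 0 * g₂ 1 - g₁ 1 * g₂ 0)⁻¹ * g₂ 0)) • M₁ 1 := by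
            funext j
            simp only [hM₁def, Pi.add_apply, Pi.smul_apply, Matrix.add_apply,
              Matrix.vecMulVec_apply, smul_eq_mul]
            field_simp
            ring
          rw [hx]
          exact add_mem (smul_mem _ _ (hrowsS M₁ hM₁U 0)) (smul_mem _ _ (hrowsS M₁ hM₁U 1))
        · have hy : w = (g₂ m)⁻¹ • M₂ m := by
            rw [hM₂def, vecMulVec_row, smul_smul, inv_mul_cancel₀ hm, one_smul]
          rw [hy]
          exact smul_mem _ _ (hrowsS M₂ hM₂U m)
        · have hz : w = ((g₁ 0 * g₂ 1 - g₁ 1 * g₂ 0)⁻¹ * g₁ 0) • M₁ 1 +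
              (-((g₁ 0 * g₂ 1 - g₁ 1 * g₂ 0)⁻¹ * g₁ 1)) • M₁ 0 := by
            funext j
            simp only [hM₁def, Pi.add_apply, Pi.smul_apply, Matrix.add_apply,
              Matrix.vecMulVec_apply, smul_eq_mul]
            field_simp
            ring
          rw [hz]
          exact add_mem (smul_mem _ _ (hrowsS M₁ hM₁U 1)) (smul_mem _ _ (hrowsS M₁ hM₁U 0))
    rw [hVxyz, ← range3 x y z, finrank_span_eq_card hxyz, Fintype.card_fin]
  -- forward direction for the 2-dimensional case
  have fwd2 : Module.finrank ℂ V₀ = 2 →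
      ∃ (g₁ g₂ : Fin 2 → ℂ) (x z : Fin 3 → ℂ),
        LinearIndependent ℂ ![g₁, g₂] ∧ LinearIndependent ℂ ![x, z] ∧
        U = span ℂ {vecMulVec g₁ x + vecMulVec g₂ z, vecMulVec g₂ x} := by
    intro h2
    have hWV : span ℂ ({u, v} : Set (Fin 3 → ℂ)) = V₀ :=
      Submodule.eq_of_le_of_finrank_eq hWuv (by rw [hfr_uv, h2])
    have hx'uv : x' ∈ span ℂ ({u, v} : Set (Fin 3 → ℂ)) := by
      rw [hWV, hV]
      exact subset_span (by simp)
    obtain ⟨c, e, hce⟩ := mem_span_pair.1 hx'uv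
    have he : e = 0 := by
      by_contra he
      apply hvnotin
      refine mem_span_pair.2 ⟨-(c / e), 1 / e, ?_⟩
      funext j
      have hj : c * u j + e * v j = x' j := by
        have := congrFun hce j
        simpa using this
      simp only [Pi.add_apply, Pi.smul_apply, smul_eq_mul]
      field_simp
      linear_combination -hj
    have hceq : x' = c • u := by rw [← hce, he, zero_smul, add_zero]
    have hc0 : c ≠ 0 := by
      rintro rfl
      rw [zero_smul] at hceq
      exact hx' hceq
    refine ⟨h₁, h₂, u, v, hih, hiuv, ?_⟩
    have hBc : B = c • vecMulVec h₂ u := by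
      rw [hBeq, hceq]
      ext i j
      simp only [Matrix.smul_apply, Matrix.vecMulVec_apply, Pi.smul_apply, smul_eq_mul]
      ring
    rw [hUAB, ← hAeq]
    refine le_antisymm ?_ ?_ <;> rw [span_le] <;> intro w hw <;>
      simp only [Set.mem_insert_iff, Set.mem_singleton_iff] at hw
    · rcases hw with rfl | rfl
      · exact subset_span (by simp)
      · rw [hBc]
        exact smul_mem _ _ (subset_span (by simp))
    · rcases hw with rfl | rfl
      · exact subset_span (by simp)
      · have hwB : vecMulVec h₂ u = c⁻¹ • B := by
          rw [hBc, smul_smul, inv_mul_cancel₀ hc0, one_smul]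
        rw [hwB]
        exact smul_mem _ _ (subset_span (by simp))
  -- forward direction for the 3-dimensional case
  have fwd3 : Module.finrank ℂ V₀ = 3 →
      ∃ (g₁ g₂ : Fin 2 → ℂ) (x y z : Fin 3 → ℂ),
        LinearIndependent ℂ ![g₁, g₂] ∧ LinearIndependent ℂ ![x, y, z] ∧
        U = span ℂ {vecMulVec g₁ x + vecMulVec g₂ z, vecMulVec g₂ y} := by
    intro h3
    refine ⟨h₁, h₂, u, x', v, hih, ?_, ?_⟩
    · rw [linearIndependent_iff_card_eq_finrank_span]
      have hr : Set.range ![u, x', v] = ({u, v, x'} : Set (Fin 3 → ℂ)) := by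
        rw [range3]
        ext w
        simp only [Set.mem_insert_iff, Set.mem_singleton_iff]
        tauto
      unfold Set.finrank
      rw [hr, ← hV, h3, Fintype.card_fin]
    · rw [hUAB, hAeq, hBeq]
  -- assembling
  refine ⟨by omega, ⟨fwd2, ?_⟩, ⟨fwd3, ?_⟩⟩
  · rintro ⟨g₁, g₂, x, z, hg, hxz, hU'⟩
    exact back2 g₁ g₂ x z hg hxz hU'
  · rintro ⟨g₁, g₂, x, y, z, hg, hxyz, hU'⟩
    exact back3 g₁ g₂ x y z hg hxyz hU'
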